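/- Let H be a weak Hopf algebra, C a nonzero coalgebra, and λ : H → k a linear map such that h·c := λ(h)c makes C a left partial H-module coalgebra. Then λ(h) = λ(ε_s(h)) for all h ∈ H if and only if C is a left H-module coalgebra via h⊳c = λ(h)c. -/
import Mathlib


open TensorProduct Coalgebra
set_option synthInstance.maxHeartbeats 1000000
set_option maxHeartbeats 1600000
set_option linter.unusedSectionVars false

noncomputable section

variable (k : Type*) [Field k]

section WeakHopfDefs

variable (H : Type*) [Ring H] [Algebra k H] [Coalgebra k H]

/-- The target map `ε_t(h) = ε(1₁ h) 1₂` of a weak bialgebra. -/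
def wεt (h : H) : H :=
  (TensorProduct.lid k H)
    ((TensorProduct.map (counit (R := k) ∘ₗ LinearMap.mulRight k h) (LinearMap.id))
      (comul (R := k) (1 : H)))

/-- The source map `ε_s(h) = 1₁ ε(h 1₂)` of a weak bialgebra. -/
def wεs (h : H) : H :=
  (TensorProduct.rid k H)
    ((TensorProduct.map (LinearMap.id) (counit (R := k) ∘ₗ LinearMap.mulLeft k h))
      (comul (R := k) (1 : H)))

/-- A weak Hopf algebra structure on an algebra `H` which is also a coalgebra:
the weak bialgebra axioms together with an antipode `S`. -/
structure WeakHopf : Type _ where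
  /-- Δ is multiplicative -/
  comul_mul : ∀ h g : H, comul (R := k) (h * g) = comul (R := k) h * comul (R := k) g
  /-- ε(hgl) = Σ ε(h g₁) ε(g₂ l) -/
  counit_weak_mul : ∀ h g l : H, counit (R := k) (h * g * l)
      = LinearMap.mul' k k
          ((TensorProduct.map (counit (R := k) ∘ₗ LinearMap.mulLeft k h)
              (counit (R := k) ∘ₗ LinearMap.mulRight k l)) (comul (R := k) g))
  /-- ε(hgl) = Σ ε(h g₂) ε(g₁ l) -/
  counit_weak_mul' : ∀ h g l : H, counit (R := k) (h * g * l)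
      = LinearMap.mul' k k
          ((TensorProduct.map (counit (R := k) ∘ₗ LinearMap.mulLeft k h)
              (counit (R := k) ∘ₗ LinearMap.mulRight k l))
            ((TensorProduct.comm k H H) (comul (R := k) g)))
  /-- (1 ⊗ Δ(1))(Δ(1) ⊗ 1) = Δ²(1) -/
  comul_one_left :
      ((1 : H) ⊗ₜ[k] comul (R := k) (1 : H))
          * ((TensorProduct.assoc k H H H) (comul (R := k) (1 : H) ⊗ₜ[k] (1 : H)))
        = (LinearMap.lTensor H (comul (R := k))) (comul (R := k) (1 : H))
  /-- (Δ(1) ⊗ 1)(1 ⊗ Δ(1)) = Δ²(1) -/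
  comul_one_right :
      ((TensorProduct.assoc k H H H) (comul (R := k) (1 : H) ⊗ₜ[k] (1 : H)))
          * ((1 : H) ⊗ₜ[k] comul (R := k) (1 : H))
        = (LinearMap.lTensor H (comul (R := k))) (comul (R := k) (1 : H))
  /-- the antipode -/
  S : H →ₗ[k] H
  /-- Σ h₁ S(h₂) = ε_t(h) -/
  antipode_t : ∀ h : H,
      LinearMap.mul' k H ((LinearMap.lTensor H S) (comul (R := k) h)) = wεt k H h
  /-- Σ S(h₁) h₂ = ε_s(h) -/
  antipode_s : ∀ h : H,
      LinearMap.mul' k H ((LinearMap.rTensor H S) (comul (R := k) h)) = wεs k H h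
  /-- Σ S(h₁) h₂ S(h₃) = S(h) -/
  antipode_mid : ∀ h : H,
      LinearMap.mul' k H
        ((TensorProduct.map S (LinearMap.mul' k H ∘ₗ LinearMap.lTensor H S))
          ((LinearMap.lTensor H (comul (R := k))) (comul (R := k) h))) = S h

end WeakHopfDefs

section Actions

variable (H : Type*) [Ring H] [Algebra k H] [Coalgebra k H]
variable (C : Type*) [AddCommGroup C] [Module k C] [Coalgebra k C]

/-- The Sweedler sum `Σ (h g₁ · c₁) ε(g₂ · c₂)` appearing in (PMC3). -/
def pmc3RHS (act : H →ₗ[k] C →ₗ[k] C) (h g : H) (c : C) : C :=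
  (TensorProduct.rid k C)
    ((TensorProduct.map
        ((TensorProduct.lift act) ∘ₗ (LinearMap.rTensor C (LinearMap.mulLeft k h)))
        (counit (R := k) ∘ₗ (TensorProduct.lift act)))
      ((TensorProduct.tensorTensorTensorComm k H H C C)
        (comul (R := k) g ⊗ₜ[k] comul (R := k) c)))

/-- The Sweedler sum `Σ ε(g₁ · c₁) (h g₂ · c₂)` appearing in the symmetry condition. -/
def pmc3symRHS (act : H →ₗ[k] C →ₗ[k] C) (h g : H) (c : C) : C :=
  (TensorProduct.lid k C)
    ((TensorProduct.map
        (counit (R := k) ∘ₗ (TensorProduct.lift act))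
        ((TensorProduct.lift act) ∘ₗ (LinearMap.rTensor C (LinearMap.mulLeft k h))))
      ((TensorProduct.tensorTensorTensorComm k H H C C)
        (comul (R := k) g ⊗ₜ[k] comul (R := k) c)))

/-- (MC2)/(PMC2): `Δ(h·c) = (h₁·c₁) ⊗ (h₂·c₂)`. -/
def SweedlerComulCompat (act : H →ₗ[k] C →ₗ[k] C) : Prop :=
  ∀ (h : H) (c : C),
    comul (R := k) (act h c)
      = (TensorProduct.map (TensorProduct.lift act) (TensorProduct.lift act))
          ((TensorProduct.tensorTensorTensorComm k H H C C)
            (comul (R := k) h ⊗ₜ[k] comul (R := k) c))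

/-- `C` is a left partial `H`-module coalgebra via `act` (`act h c = h · c`). -/
structure IsPartialModuleCoalgebra (act : H →ₗ[k] C →ₗ[k] C) : Prop where
  pmc1 : ∀ c : C, act 1 c = c
  pmc2 : SweedlerComulCompat k H C act
  pmc3 : ∀ (h g : H) (c : C), act h (act g c) = pmc3RHS k H C act h g c

/-- `C` is a symmetric left partial `H`-module coalgebra via `act`. -/
structure IsSymmetricPartialModuleCoalgebra (act : H →ₗ[k] C →ₗ[k] C)
    extends IsPartialModuleCoalgebra k H C act : Prop where
  pmc3sym : ∀ (h g : H) (c : C), act h (act g c) = pmc3symRHS k H C act h g c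

/-- `C` is a left `H`-module coalgebra via `act`. -/
structure IsModuleCoalgebra (act : H →ₗ[k] C →ₗ[k] C) : Prop where
  mc1 : ∀ c : C, act 1 c = c
  mc2 : SweedlerComulCompat k H C act
  mc3 : ∀ (h g : H) (c : C), act h (act g c) = act (h * g) c
  mc4 : ∀ (h : H) (c : C), counit (R := k) (act h c) = counit (R := k) (act (wεs k H h) c)

end Actions

end


noncomputable section AuxForStatement8

variable {k : Type*} [Field k] {H : Type*} [Ring H] [Algebra k H] [Coalgebra k H]
variable {C : Type*} [AddCommGroup C] [Module k C] [Coalgebra k C]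

/-- convolution of two linear functionals -/
def myconv (f g : H →ₗ[k] k) : H →ₗ[k] k :=
  LinearMap.mul' k k ∘ₗ TensorProduct.map f g ∘ₗ comul

lemma myconv_apply (f g : H →ₗ[k] k) (x : H) :
    myconv f g x = LinearMap.mul' k k (TensorProduct.map f g (comul (R := k) x)) := rfl

lemma myconv_assoc (f g l : H →ₗ[k] k) :
    myconv (myconv f g) l = myconv f (myconv g l) := by
  ext x
  have A1 : ∀ t : H ⊗[k] H,
      LinearMap.mul' k k (TensorProduct.map (myconv f g) l t)
        = (LinearMap.mul' k k ∘ₗ TensorProduct.map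
            (LinearMap.mul' k k ∘ₗ TensorProduct.map f g) l)
            ((LinearMap.rTensor H (comul (R := k))) t) := by
    intro t
    induction t using TensorProduct.induction_on with
    | zero => simp
    | tmul a b => simp [myconv_apply]
    | add u v hu hv => simp [map_add, hu, hv]
  have A2 : ∀ t : H ⊗[k] H,
      LinearMap.mul' k k (TensorProduct.map f (myconv g l) t)
        = (LinearMap.mul' k k ∘ₗ TensorProduct.map f
            (LinearMap.mul' k k ∘ₗ TensorProduct.map g l))
            ((LinearMap.lTensor H (comul (R := k))) t) := by
    intro t
    induction t using TensorProduct.induction_on with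
    | zero => simp
    | tmul a b => simp [myconv_apply]
    | add u v hu hv => simp [map_add, hu, hv]
  have A3 : ∀ s : (H ⊗[k] H) ⊗[k] H,
      (LinearMap.mul' k k ∘ₗ TensorProduct.map
          (LinearMap.mul' k k ∘ₗ TensorProduct.map f g) l) s
        = (LinearMap.mul' k k ∘ₗ TensorProduct.map f
            (LinearMap.mul' k k ∘ₗ TensorProduct.map g l))
            ((TensorProduct.assoc k H H H) s) := by
    intro s
    induction s using TensorProduct.induction_on with
    | zero => simp
    | tmul u c =>
      induction u using TensorProduct.induction_on with
      | zero => simp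
      | tmul a b => simp [mul_assoc]
      | add u v hu hv => simp_all [add_tmul]
    | add u v hu hv => simp [map_add, hu, hv]
  calc myconv (myconv f g) l x
      = LinearMap.mul' k k (TensorProduct.map (myconv f g) l (comul (R := k) x)) := rfl
    _ = _ := by
        rw [A1, A3, Coalgebra.coassoc_apply, ← A2]
        rfl

lemma exists_counit_eq_one [Nontrivial C] : ∃ c : C, counit (R := k) c = (1 : k) := by
  by_contra hno
  push_neg at hno
  have hzero : ∀ c : C, counit (R := k) c = 0 := by
    intro c
    by_contra hc
    exact hno ((counit (R := k) c)⁻¹ • c) (by simp [map_smul, inv_mul_cancel₀ hc])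
  have hall : ∀ c : C, c = 0 := by
    intro c
    have h1 := Coalgebra.rTensor_counit_comul (R := k) c
    have h2 : (counit (R := k) : C →ₗ[k] k) = 0 := LinearMap.ext hzero
    rw [h2] at h1
    simp only [LinearMap.rTensor_zero, LinearMap.zero_apply] at h1
    have := congrArg (TensorProduct.lid k C) h1.symm
    simpa using this
  obtain ⟨x, y, hxy⟩ := exists_pair_ne C
  exact hxy ((hall x).trans (hall y).symm)

lemma smul_cancel_of_ne_zero {a b : k} {c : C} (hc : c ≠ 0) (h : a • c = b • c) : a = b := by
  by_contra hne
  have h0 : (a - b) • c = 0 := by rw [sub_smul, h, sub_self]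
  rcases smul_eq_zero.mp h0 with h' | h'
  · exact hne (sub_eq_zero.mp h')
  · exact hc h'

/-- `pmc3RHS` for the scalar action is a convolution scalar times `c`. -/
lemma pmc3RHS_lsmul (lam : H →ₗ[k] k) (h g : H) (c : C) :
    pmc3RHS k H C ((LinearMap.lsmul k C) ∘ₗ lam) h g c
      = myconv (lam ∘ₗ LinearMap.mulLeft k h) lam g • c := by
  have key : ∀ (t : H ⊗[k] H) (s : C ⊗[k] C),
      (TensorProduct.rid k C)
        ((TensorProduct.map
            ((TensorProduct.lift ((LinearMap.lsmul k C) ∘ₗ lam))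
              ∘ₗ (LinearMap.rTensor C (LinearMap.mulLeft k h)))
            (counit (R := k) ∘ₗ (TensorProduct.lift ((LinearMap.lsmul k C) ∘ₗ lam))))
          ((TensorProduct.tensorTensorTensorComm k H H C C) (t ⊗ₜ[k] s)))
        = (LinearMap.mul' k k
            (TensorProduct.map (lam ∘ₗ LinearMap.mulLeft k h) lam t))
          • ((TensorProduct.rid k C) ((LinearMap.lTensor C (counit (R := k))) s)) := by
    intro t s
    induction t using TensorProduct.induction_on with
    | zero => simp
    | tmul a b =>
      induction s using TensorProduct.induction_on with
      | zero => simp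
      | tmul x y =>
        simp [TensorProduct.tensorTensorTensorComm_tmul, smul_smul,
          mul_comm, mul_assoc, mul_left_comm]
      | add u v hu hv => simp_all [tmul_add, smul_add]
    | add u v hu hv => simp_all [add_tmul, add_smul]
  have hc : (TensorProduct.rid k C)
      ((LinearMap.lTensor C (counit (R := k))) (comul (R := k) c)) = c := by
    rw [Coalgebra.lTensor_counit_comul (R := k) c]
    simp
  rw [pmc3RHS, key, hc, myconv_apply]

/-- `λ(ε_s(x)) = Σ λ(1₁) ε(x 1₂)`. -/
lemma lam_wεs (lam : H →ₗ[k] k) (x : H) :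
    lam (wεs k H x)
      = LinearMap.mul' k k
          (TensorProduct.map lam (counit (R := k) ∘ₗ LinearMap.mulLeft k x)
            (comul (R := k) (1 : H))) := by
  have key : ∀ t : H ⊗[k] H,
      lam ((TensorProduct.rid k H)
        ((TensorProduct.map (LinearMap.id) (counit (R := k) ∘ₗ LinearMap.mulLeft k x)) t))
      = LinearMap.mul' k k
          (TensorProduct.map lam (counit (R := k) ∘ₗ LinearMap.mulLeft k x) t) := by
    intro t
    induction t using TensorProduct.induction_on with
    | zero => simp
    | tmul u v => simp [mul_comm]
    | add u v hu hv => simp [map_add, hu, hv]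
  rw [wεs, key]

/-- The four-fold functional `Θ((u⊗v)⊗(a⊗b)) = λ(u) ε(h a) ε(b v)`. -/
def theta (lam : H →ₗ[k] k) (h : H) : (H ⊗[k] H) ⊗[k] (H ⊗[k] H) →ₗ[k] k :=
  LinearMap.mul' k k ∘ₗ
    TensorProduct.map
      (LinearMap.mul' k k ∘ₗ
        TensorProduct.map lam (counit (R := k) ∘ₗ LinearMap.mulLeft k h))
      (counit (R := k) ∘ₗ LinearMap.mul' k H ∘ₗ (TensorProduct.comm k H H).toLinearMap)
    ∘ₗ (TensorProduct.tensorTensorTensorComm k H H H H).toLinearMap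

lemma theta_tmul (lam : H →ₗ[k] k) (h u v a b : H) :
    theta lam h ((u ⊗ₜ[k] v) ⊗ₜ[k] (a ⊗ₜ[k] b))
      = (lam u * counit (R := k) (h * a)) * counit (R := k) (b * v) := by
  simp [theta, TensorProduct.tensorTensorTensorComm_tmul]

lemma lam_mul_conv (wh : WeakHopf k H) (lam : H →ₗ[k] k)
    (hl : ∀ x : H, lam x = lam (wεs k H x)) (h g : H) :
    lam (h * g) = myconv (counit (R := k) ∘ₗ LinearMap.mulLeft k h) lam g := by
  have step1 : ∀ t : H ⊗[k] H,
      LinearMap.mul' k k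
          (TensorProduct.map lam (counit (R := k) ∘ₗ LinearMap.mulLeft k (h * g)) t)
        = theta lam h (t ⊗ₜ[k] comul (R := k) g) := by
    intro t
    induction t using TensorProduct.induction_on with
    | zero => simp
    | tmul u v =>
      have inner : ∀ s : H ⊗[k] H,
          theta lam h ((u ⊗ₜ[k] v) ⊗ₜ[k] s)
            = lam u * LinearMap.mul' k k
                ((TensorProduct.map (counit (R := k) ∘ₗ LinearMap.mulLeft k h)
                    (counit (R := k) ∘ₗ LinearMap.mulRight k v)) s) := by
        intro s
        induction s using TensorProduct.induction_on with
        | zero => simp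
        | tmul a b => simp [theta_tmul, mul_assoc]
        | add p q hpq hq => simp [tmul_add, map_add, hpq, hq, mul_add]
      rw [inner]
      simp only [TensorProduct.map_tmul, LinearMap.mul'_apply, LinearMap.comp_apply,
        LinearMap.mulLeft_apply]
      rw [← wh.counit_weak_mul h g v]
    | add p q hpq hq => simp only [map_add, add_tmul, hpq, hq]
  have step2 : ∀ s : H ⊗[k] H,
      theta lam h (comul (R := k) (1 : H) ⊗ₜ[k] s)
        = LinearMap.mul' k k
            (TensorProduct.map (counit (R := k) ∘ₗ LinearMap.mulLeft k h) lam s) := by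
    intro s
    induction s using TensorProduct.induction_on with
    | zero => simp
    | tmul a b =>
      have inner : ∀ t : H ⊗[k] H,
          theta lam h (t ⊗ₜ[k] (a ⊗ₜ[k] b))
            = LinearMap.mul' k k
                (TensorProduct.map lam (counit (R := k) ∘ₗ LinearMap.mulLeft k b) t)
                * counit (R := k) (h * a) := by
        intro t
        induction t using TensorProduct.induction_on with
        | zero => simp
        | tmul u v => simp [theta_tmul]; ring
        | add p q hpq hq => simp [add_tmul, map_add, hpq, hq, add_mul]
      rw [inner, ← lam_wεs, ← hl b]
      simp [mul_comm]
    | add p q hpq hq => simp [tmul_add, map_add, hpq, hq]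
  calc lam (h * g) = lam (wεs k H (h * g)) := hl _
    _ = LinearMap.mul' k k
          (TensorProduct.map lam (counit (R := k) ∘ₗ LinearMap.mulLeft k (h * g))
            (comul (R := k) (1 : H))) := lam_wεs lam _
    _ = theta lam h (comul (R := k) (1 : H) ⊗ₜ[k] comul (R := k) g) := step1 _
    _ = _ := step2 _

lemma conv_B [Nontrivial C] (lam : H →ₗ[k] k)
    (hp : IsPartialModuleCoalgebra k H C ((LinearMap.lsmul k C) ∘ₗ lam)) (h g : H) :
    lam h * lam g = myconv (lam ∘ₗ LinearMap.mulLeft k h) lam g := by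
  obtain ⟨c, hc⟩ := exists_counit_eq_one (k := k) (C := C)
  have hc0 : c ≠ 0 := by rintro rfl; simp at hc
  have h3 := hp.pmc3 h g c
  rw [pmc3RHS_lsmul] at h3
  simp only [LinearMap.comp_apply, LinearMap.lsmul_apply, map_smul, smul_smul,
    smul_eq_mul] at h3
  exact smul_cancel_of_ne_zero hc0 (by rw [mul_comm]; exact h3)

lemma lam_one_eq [Nontrivial C] (lam : H →ₗ[k] k)
    (hp : IsPartialModuleCoalgebra k H C ((LinearMap.lsmul k C) ∘ₗ lam)) :
    lam (1 : H) = 1 := by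
  obtain ⟨c, hc⟩ := exists_counit_eq_one (k := k) (C := C)
  have hc0 : c ≠ 0 := by rintro rfl; simp at hc
  have h1 := hp.pmc1 c
  simp only [LinearMap.comp_apply, LinearMap.lsmul_apply] at h1
  exact smul_cancel_of_ne_zero hc0 (by rw [h1, one_smul])

lemma conv_idem [Nontrivial C] (lam : H →ₗ[k] k)
    (hp : IsPartialModuleCoalgebra k H C ((LinearMap.lsmul k C) ∘ₗ lam)) :
    myconv lam lam = lam := by
  ext g
  have := conv_B (C := C) lam hp 1 g
  rw [LinearMap.mulLeft_one, LinearMap.comp_id, lam_one_eq (C := C) lam hp, one_mul] at this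
  exact this.symm

lemma lam_mul [Nontrivial C] (wh : WeakHopf k H) (lam : H →ₗ[k] k)
    (hp : IsPartialModuleCoalgebra k H C ((LinearMap.lsmul k C) ∘ₗ lam))
    (hl : ∀ x : H, lam x = lam (wεs k H x)) (h g : H) :
    lam (h * g) = lam h * lam g := by
  have hA : myconv (counit (R := k) ∘ₗ LinearMap.mulLeft k h) lam = lam ∘ₗ LinearMap.mulLeft k h :=
    LinearMap.ext fun g => (lam_mul_conv wh lam hl h g).symm
  calc lam (h * g) = myconv (counit (R := k) ∘ₗ LinearMap.mulLeft k h) lam g :=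
        lam_mul_conv wh lam hl h g
    _ = myconv (counit (R := k) ∘ₗ LinearMap.mulLeft k h) (myconv lam lam) g := by
        rw [conv_idem (C := C) lam hp]
    _ = myconv (myconv (counit (R := k) ∘ₗ LinearMap.mulLeft k h) lam) lam g := by
        rw [myconv_assoc]
    _ = myconv (lam ∘ₗ LinearMap.mulLeft k h) lam g := by rw [hA]
    _ = lam h * lam g := (conv_B (C := C) lam hp h g).symm

end AuxForStatement8

/-- If `λ` defines a partial action of `H` on a nonzero coalgebra `C` by
`h · c = λ(h) • c`, then `λ(h) = λ(ε_s(h))` for all `h` iff `C` is a (global) left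
`H`-module coalgebra via the same map. -/
theorem lambda_source_invariant_iff_global
    (k : Type*) [Field k] (H : Type*) [Ring H] [Algebra k H] [Coalgebra k H]
    (C : Type*) [AddCommGroup C] [Module k C] [Coalgebra k C] [Nontrivial C]
    (wh : WeakHopf k H) (lam : H →ₗ[k] k)
    (hp : IsPartialModuleCoalgebra k H C ((LinearMap.lsmul k C) ∘ₗ lam)) :
    (∀ h : H, lam h = lam (wεs k H h)) ↔
      IsModuleCoalgebra k H C ((LinearMap.lsmul k C) ∘ₗ lam) := by
  constructor
  · intro hl
    have hmul := lam_mul (C := C) wh lam hp hl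
    refine ⟨hp.pmc1, hp.pmc2, ?_, ?_⟩
    · intro h g c
      simp only [LinearMap.comp_apply, LinearMap.lsmul_apply, smul_smul, hmul]
    · intro h c
      simp only [LinearMap.comp_apply, LinearMap.lsmul_apply, map_smul, smul_eq_mul]
      rw [← hl h]
  · intro hm h
    obtain ⟨c, hc⟩ := exists_counit_eq_one (k := k) (C := C)
    have h4 := hm.mc4 h c
    simp only [LinearMap.comp_apply, LinearMap.lsmul_apply, map_smul, smul_eq_mul, hc,
      mul_one] at h4
    exact h4
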